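/- Fix positive integers n, r and an integer t ≥ 2 with t < s. For all sufficiently large s, ⌊(Σ_{k=n}^∞ 1/f_{rk}(s,-t))^{-1}⌋ = f_{rn}(s,-t) - f_{r(n-1)}(s,-t) - 1. -/

import Mathlib

/-- Generalized Fibonacci sequence: f 0 = 0, f 1 = 1, f (n+2) = s * f (n+1) + t * f n. -/
def genFib (s t : ℤ) : ℕ → ℤ
  | 0 => 0
  | 1 => 1
  | n + 2 => s * genFib s t (n + 1) + t * genFib s t n


lemma genFib_two (s c : ℤ) (k : ℕ) :
    genFib s c (k+2) = s * genFib s c (k+1) + c * genFib s c k := rfl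

lemma genFib_addf (s c : ℤ) (j : ℕ) :
    ∀ m, genFib s c (m + j + 1)
      = genFib s c (m+1) * genFib s c (j+1) + c * genFib s c m * genFib s c j := by
  intro m
  induction m using Nat.twoStepInduction with
  | zero => simp [genFib]
  | one =>
      rw [show 1 + j + 1 = j + 2 from by omega, genFib_two]
      simp [genFib]
  | more m ih1 ih2 =>
      have e1 : genFib s c (m+2+j+1) = s * genFib s c (m+1+j+1) + c * genFib s c (m+j+1) := by
        rw [show m+2+j+1 = (m+j+1)+2 from by omega, show m+1+j+1 = (m+j+1)+1 from by omega]
        exact genFib_two s c (m+j+1)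
      have e2 : genFib s c (m+2+1) = s * genFib s c (m+1+1) + c * genFib s c (m+1) := by
        rw [show m+2+1 = (m+1)+2 from by omega]
        exact genFib_two s c (m+1)
      rw [e1, ih1, ih2, e2, show m+1+1 = m+2 from rfl, genFib_two s c m]
      ring

lemma genFib_catalan (s c : ℤ) :
    ∀ k, genFib s c (k+1)^2 - genFib s c (k+2) * genFib s c k = (-c)^k := by
  intro k
  induction k with
  | zero => simp [genFib]
  | succ k ih =>
      have h1 := genFib_two s c k
      have h2 := genFib_two s c (k+1)
      have : genFib s c (k+1+1)^2 - genFib s c (k+1+2) * genFib s c (k+1)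
          = (-c) * (genFib s c (k+1)^2 - genFib s c (k+2) * genFib s c k) := by
        rw [h2, h1]; ring
      rw [this, ih]; ring

lemma genFib_shift (s c : ℤ) (m : ℕ) :
    ∀ a, genFib s c (a + 2*(m+1))
      = (genFib s c (m+2) + c * genFib s c m) * genFib s c (a + (m+1))
        - (-c)^(m+1) * genFib s c a := by
  intro a
  induction a using Nat.twoStepInduction with
  | zero =>
      rw [show 0 + 2*(m+1) = (m+1) + m + 1 from by omega, genFib_addf,
        show 0 + (m+1) = m + 1 from by omega, show (m+1)+1 = m+2 from by omega]
      simp [genFib]; ring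
  | one =>
      rw [show 1 + 2*(m+1) = (m+1) + (m+1) + 1 from by omega, genFib_addf,
        show 1 + (m+1) = m + 2 from by omega, show (m+1)+1 = m+2 from by omega]
      simp only [genFib]
      linear_combination c * genFib_catalan s c m + c * genFib s c m * genFib_two s c m
  | more a ih1 ih2 =>
      have e1 : genFib s c (a+2+2*(m+1))
          = s * genFib s c (a+1+2*(m+1)) + c * genFib s c (a+2*(m+1)) := by
        rw [show a+2+2*(m+1) = (a+2*(m+1))+2 from by omega,
          show a+1+2*(m+1) = (a+2*(m+1))+1 from by omega]
        exact genFib_two s c (a+2*(m+1))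
      have e2 : genFib s c (a+2+(m+1))
          = s * genFib s c (a+1+(m+1)) + c * genFib s c (a+(m+1)) := by
        rw [show a+2+(m+1) = (a+(m+1))+2 from by omega,
          show a+1+(m+1) = (a+(m+1))+1 from by omega]
        exact genFib_two s c (a+(m+1))
      rw [e1, ih1, ih2, e2, genFib_two s c a]
      ring

lemma one_le_pow_int {a : ℤ} (h : 1 ≤ a) (k : ℕ) : 1 ≤ a ^ k := by
  induction k with
  | zero => simp
  | succ k ih => rw [pow_succ]; nlinarith

lemma seq_floor (u : ℕ → ℤ) (L T F : ℤ) (hT : 2 ≤ T) (hF : 1 ≤ F)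
    (hLT : T + 2 ≤ L) (hLF : F + 1 ≤ L)
    (hu0 : u 0 = 0) (hu1 : u 1 = F)
    (hrec : ∀ k, u (k+2) = L * u (k+1) - T * u k) (p : ℕ) :
    ⌊(∑' k : ℕ, (1:ℝ) / (u (p+1+k) : ℝ))⁻¹⌋ = u (p+1) - u p - 1 := by
  have hL4 : 4 ≤ L := by linarith
  -- Catalan identity
  have hcat : ∀ k, u (k+1)^2 - u (k+2) * u k = T^k * F^2 := by
    intro k
    induction k with
    | zero =>
        show u 1^2 - u 2 * u 0 = T^0 * F^2
        rw [hu0, hu1]; ring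
    | succ k ih =>
        show u (k+2)^2 - u (k+3) * u (k+1) = T^(k+1) * F^2
        have h1 : u (k+3) = L * u (k+2) - T * u (k+1) := hrec (k+1)
        linear_combination T * ih + (u (k+2)) * hrec k - (u (k+1)) * h1
  -- growth facts
  have key : ∀ k, 0 ≤ u k ∧ (L-1)^k * F ≤ u (k+1) - u k := by
    intro k
    induction k with
    | zero =>
        show 0 ≤ u 0 ∧ (L-1)^0 * F ≤ u 1 - u 0
        rw [hu0, hu1]; norm_num
    | succ k ih =>
        obtain ⟨h0, h1⟩ := ih
        have hp1 : (1:ℤ) ≤ (L-1)^k := one_le_pow_int (by linarith) k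
        constructor
        · nlinarith
        · show (L-1)^(k+1) * F ≤ u (k+2) - u (k+1)
          rw [hrec k, pow_succ]
          nlinarith [mul_le_mul_of_nonneg_left h1 (show (0:ℤ) ≤ L - 1 by linarith),
            mul_nonneg (show (0:ℤ) ≤ L-1-T by linarith) h0]
  have hgpos : ∀ k, 1 ≤ u (k+1) - u k := by
    intro k
    have h1 : (1:ℤ) ≤ (L-1)^k := one_le_pow_int (by linarith) k
    have h2 : (1:ℤ)*1 ≤ (L-1)^k * F := mul_le_mul h1 hF (by norm_num) (by linarith)
    linarith [(key k).2]
  have hu1le : ∀ k, 1 ≤ u (k+1) := by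
    intro k; have := (key k).1; have := hgpos k; linarith
  have hgmono : ∀ k, (L-1) * (u (k+1) - u k) ≤ u (k+2) - u (k+1) := by
    intro k; rw [hrec k]
    nlinarith [mul_nonneg (show (0:ℤ) ≤ L-1-T by linarith) (key k).1]
  have hgle : ∀ j k, j ≤ k → u (j+1) - u j ≤ u (k+1) - u k := by
    intro j k hjk
    induction k, hjk using Nat.le_induction with
    | base => exact le_rfl
    | succ k hk ih =>
        have h1 := hgmono k
        have h2 := hgpos k
        have h3 : u (k+1) - u k ≤ u (k+2) - u (k+1) := by
          nlinarith [mul_nonneg (show (0:ℤ) ≤ L-2 by linarith)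
            (show (0:ℤ) ≤ u (k+1) - u k by linarith)]
        show u (j+1) - u j ≤ u (k+2) - u (k+1)
        linarith
  have hgrow2 : ∀ k, 2^k ≤ u (k+1) - u k := by
    intro k
    have h1 : (2:ℤ)^k ≤ (L-1)^k := pow_le_pow_left₀ (by norm_num) (by linarith) k
    have h2 : (2:ℤ)^k * 1 ≤ (L-1)^k * F :=
      mul_le_mul h1 hF (by norm_num) (pow_nonneg (by linarith) k)
    linarith [(key k).2]
  have hdouble : ∀ k, 2 * u (k+1) ≤ u (k+2) := by
    intro k; rw [hrec k]
    nlinarith [mul_nonneg (show (0:ℤ) ≤ L-2-T by linarith)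
        (show (0:ℤ) ≤ u (k+1) by linarith [hu1le k]),
      mul_nonneg (show (0:ℤ) ≤ T by linarith)
        (show (0:ℤ) ≤ u (k+1) - u k by linarith [hgpos k])]
  have hgeom : ∀ k, 2^k * u (p+1) ≤ u (p+1+k) := by
    intro k
    induction k with
    | zero => simp
    | succ k ih =>
        have h2 : 2 * u (p+k+1) ≤ u (p+k+2) := hdouble (p+k)
        have e2 : p+1+k = p+k+1 := by omega
        rw [e2] at ih
        have hup : 0 ≤ u (p+1) := (key (p+1)).1
        show 2^(k+1) * u (p+1) ≤ u (p+1+(k+1))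
        rw [show p+1+(k+1) = p+k+2 from by omega]
        calc 2^(k+1) * u (p+1) = 2 * (2^k * u (p+1)) := by ring
          _ ≤ 2 * u (p+k+1) := by linarith
          _ ≤ u (p+k+2) := h2
  have hBbig : ∀ j, T^j * F^2 ≤ u (j+2) - u (j+1) := by
    intro j
    have h1 : T^j ≤ (L-1)^j := pow_le_pow_left₀ (by linarith) (by linarith) j
    have h2 : (L-1)^(j+1) * F ≤ u (j+2) - u (j+1) := (key (j+1)).2
    have hTj : (0:ℤ) < T^j := pow_pos (by linarith) j
    have h3 : T^j * F^2 ≤ (L-1)^(j+1)*F := by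
      have h4 : T^j * F ≤ (L-1)^j * (L-1) :=
        mul_le_mul h1 (by linarith) (by linarith) (pow_nonneg (by linarith) j)
      rw [pow_succ (L-1) j]
      nlinarith [mul_le_mul_of_nonneg_right h4 (show (0:ℤ) ≤ F by linarith)]
    linarith
  -- ===== real part =====
  have hT0 : (0:ℤ) < T := by linarith
  have hUidx : ∀ k, (1:ℝ) ≤ (u (p+k+1) : ℝ) := by
    intro k; exact_mod_cast hu1le (p+k)
  have haPos : ∀ k, 0 < (1:ℝ) / (u (p+1+k) : ℝ) := by
    intro k
    rw [show p+1+k = p+k+1 from by omega]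
    have := hUidx k; positivity
  have hCpos : (0:ℝ) < (u (p+1) : ℝ) := by
    have := hu1le p
    have : (1:ℝ) ≤ (u (p+1) : ℝ) := by exact_mod_cast this
    linarith
  have hsum : Summable (fun k : ℕ => (1:ℝ) / (u (p+1+k) : ℝ)) := by
    refine Summable.of_nonneg_of_le (fun k => (haPos k).le) (fun k => ?_)
      ((summable_geometric_of_lt_one (by norm_num : (0:ℝ) ≤ 1/2)
        (by norm_num)).mul_right (1 / (u (p+1) : ℝ)))
    have h1 : ((2:ℝ))^k * (u (p+1) : ℝ) ≤ (u (p+1+k) : ℝ) := by exact_mod_cast hgeom k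
    have h2 : (0:ℝ) < (2:ℝ)^k * (u (p+1) : ℝ) := by positivity
    calc (1:ℝ) / (u (p+1+k) : ℝ) ≤ 1 / ((2:ℝ)^k * (u (p+1) : ℝ)) :=
          one_div_le_one_div_of_le h2 h1
      _ = (1/2:ℝ)^k * (1 / (u (p+1) : ℝ)) := by
          rw [div_pow, one_pow, div_mul_div_comm, one_mul]
  -- strict termwise lower bracket
  have hterm_lt : ∀ k, 1/((u (p+k+1):ℝ) - (u (p+k):ℝ)) - 1/((u (p+k+2):ℝ) - (u (p+k+1):ℝ))
      < 1/((u (p+1+k)):ℝ) := by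
    intro k
    have hA1 : (1:ℝ) ≤ (u (p+k+1):ℝ) - (u (p+k):ℝ) := by exact_mod_cast hgpos (p+k)
    have hB1 : (1:ℝ) ≤ (u (p+k+2):ℝ) - (u (p+k+1):ℝ) := by exact_mod_cast hgpos (p+k+1)
    have hC1 : (1:ℝ) ≤ (u (p+k+1):ℝ) := hUidx k
    have hTF : (0:ℤ) < T^(p+k) * F^2 :=
      mul_pos (pow_pos hT0 (p+k)) (pow_pos (by linarith) 2)
    have hstrict : u (p+k+1) * ((u (p+k+2) - u (p+k+1)) - (u (p+k+1) - u (p+k)))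
        < (u (p+k+1) - u (p+k)) * (u (p+k+2) - u (p+k+1)) := by
      nlinarith [hcat (p+k), hTF]
    have hstrictR : (u (p+k+1):ℝ) * (((u (p+k+2):ℝ) - (u (p+k+1):ℝ)) - ((u (p+k+1):ℝ) - (u (p+k):ℝ)))
        < ((u (p+k+1):ℝ) - (u (p+k):ℝ)) * ((u (p+k+2):ℝ) - (u (p+k+1):ℝ)) := by
      exact_mod_cast hstrict
    rw [show p+1+k = p+k+1 from by omega]
    rw [div_sub_div _ _ (by linarith : ((u (p+k+1):ℝ) - (u (p+k):ℝ)) ≠ 0)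
        (by linarith : ((u (p+k+2):ℝ) - (u (p+k+1):ℝ)) ≠ 0),
      div_lt_div_iff₀ (by nlinarith) (by linarith)]
    nlinarith [hstrictR]
  -- telescoping abbreviations
  have hweak : ∀ k, 1/((u (p+k+1):ℝ) - (u (p+k):ℝ)) - 1/((u (p+k+2):ℝ) - (u (p+k+1):ℝ))
      ≤ 1/((u (p+1+k)):ℝ) := fun k => (hterm_lt k).le
  -- lower bound:  1/(u(p+1)-u(p)) < tsum
  have hlow : 1/((u (p+1):ℝ) - (u p:ℝ)) < ∑' k : ℕ, (1:ℝ) / (u (p+1+k) : ℝ) := by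
    set f : ℕ → ℝ := fun j => 1/((u (p+j+1):ℝ) - (u (p+j):ℝ)) with hf_def
    have hfpos : ∀ j, 0 < f j := by
      intro j
      have : (1:ℝ) ≤ (u (p+j+1):ℝ) - (u (p+j):ℝ) := by exact_mod_cast hgpos (p+j)
      simp only [hf_def]; positivity
    have hε : 0 < 1/((u (p+1):ℝ)) - (f 0 - f 1) := by
      have h0 := hterm_lt 0
      simp only [Nat.add_zero] at h0
      have e1 : f 0 = 1/((u (p+1):ℝ) - (u p:ℝ)) := by
        simp only [hf_def, Nat.add_zero]
      have e2 : f 1 = 1/((u (p+2):ℝ) - (u (p+1):ℝ)) := by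
        simp only [hf_def]
      rw [e1, e2]
      linarith
    obtain ⟨N, hN⟩ := exists_pow_lt_of_lt_one hε (by norm_num : (1/2:ℝ) < 1)
    have hfN : f (N+2) ≤ (1/2:ℝ)^N := by
      have h1 : (2:ℤ)^N ≤ u (p+(N+2)+1) - u (p+(N+2)) := by
        have h2 := hgrow2 (p+(N+2))
        have h3 : (2:ℤ)^N ≤ 2^(p+(N+2)) := pow_le_pow_right₀ (by norm_num) (by omega)
        linarith
      have h1R : (2:ℝ)^N ≤ (u (p+(N+2)+1):ℝ) - (u (p+(N+2)):ℝ) := by exact_mod_cast h1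
      have h2R : (0:ℝ) < (2:ℝ)^N := by positivity
      simp only [hf_def]
      calc 1/((u (p+(N+2)+1):ℝ) - (u (p+(N+2)):ℝ)) ≤ 1/(2:ℝ)^N :=
            one_div_le_one_div_of_le h2R h1R
        _ = (1/2:ℝ)^N := by rw [div_pow, one_pow]
    have hshift : Summable (fun k : ℕ => (1:ℝ)/(u (p+1+(k+1)):ℝ)) :=
      (summable_nat_add_iff (f := fun k : ℕ => (1:ℝ)/(u (p+1+k):ℝ)) 1).mpr hsum
    have htele : ∑ k ∈ Finset.range (N+1), (f (k+1) - f (k+1+1)) = f 1 - f (N+1+1) :=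
      Finset.sum_range_sub' (fun j => f (j+1)) (N+1)
    have hpart : f 1 - f (N+2) ≤ ∑' k : ℕ, (1:ℝ)/(u (p+1+(k+1)):ℝ) := by
      have h1 : ∑ k ∈ Finset.range (N+1), (f (k+1) - f (k+1+1))
          ≤ ∑ k ∈ Finset.range (N+1), (1:ℝ)/(u (p+1+(k+1)):ℝ) := by
        apply Finset.sum_le_sum
        intro i _
        have h2 := hweak (i+1)
        simp only [hf_def]
        rw [show p+(i+1)+1 = p+(i+1+1) from by omega] at h2 ⊢
        rw [show p+(i+1+1)+1 = p+(i+1)+2 from by omega]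
        exact h2
      have h3 : ∑ k ∈ Finset.range (N+1), (1:ℝ)/(u (p+1+(k+1)):ℝ)
          ≤ ∑' k : ℕ, (1:ℝ)/(u (p+1+(k+1)):ℝ) := by
        apply Summable.sum_le_tsum _ (fun i _ => ?_) hshift
        have := haPos (i+1); linarith
      rw [htele] at h1
      calc f 1 - f (N+2) = f 1 - f (N+1+1) := by norm_num
        _ ≤ ∑ k ∈ Finset.range (N+1), (1:ℝ)/(u (p+1+(k+1)):ℝ) := h1
        _ ≤ _ := h3
    have hsplit : ∑' k : ℕ, (1:ℝ) / (u (p+1+k) : ℝ)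
        = 1/((u (p+1):ℝ)) + ∑' k : ℕ, (1:ℝ)/(u (p+1+(k+1)):ℝ) := by
      have := Summable.tsum_eq_zero_add hsum
      rw [this]
    have e1 : f 0 = 1/((u (p+1):ℝ) - (u p:ℝ)) := by simp only [hf_def, Nat.add_zero]
    rw [hsplit, ← e1]
    have : f (N+2) < 1/((u (p+1):ℝ)) - (f 0 - f 1) := lt_of_le_of_lt hfN hN
    linarith [hpart]
  -- upper bound when D ≥ 2
  have hupper : 2 ≤ u (p+1) - u p →
      (∑' k : ℕ, (1:ℝ) / (u (p+1+k) : ℝ)) ≤ 1/(((u (p+1) - u p : ℤ):ℝ) - 1) := by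
    intro hD2
    have hg2 : ∀ j, 2 ≤ u (p+j+1) - u (p+j) := by
      intro j
      have := hgle p (p+j) (by omega)
      linarith
    have hterm_le : ∀ k, 1/((u (p+1+k)):ℝ)
        ≤ 1/(((u (p+k+1):ℝ) - (u (p+k):ℝ)) - 1) - 1/(((u (p+k+2):ℝ) - (u (p+k+1):ℝ)) - 1) := by
      intro k
      have hA2 : (2:ℝ) ≤ (u (p+k+1):ℝ) - (u (p+k):ℝ) := by exact_mod_cast hg2 k
      have hB2 : (2:ℝ) ≤ (u (p+k+2):ℝ) - (u (p+k+1):ℝ) := by exact_mod_cast hg2 (k+1)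
      have hC1 : (1:ℝ) ≤ (u (p+k+1):ℝ) := hUidx k
      have hintle : (u (p+k+1) - u (p+k) - 1) * (u (p+k+2) - u (p+k+1) - 1)
          ≤ u (p+k+1) * ((u (p+k+2) - u (p+k+1)) - (u (p+k+1) - u (p+k))) := by
        nlinarith [hcat (p+k), hBbig (p+k), hgpos (p+k)]
      have hintleR : ((u (p+k+1):ℝ) - (u (p+k):ℝ) - 1) * ((u (p+k+2):ℝ) - (u (p+k+1):ℝ) - 1)
          ≤ (u (p+k+1):ℝ) * (((u (p+k+2):ℝ) - (u (p+k+1):ℝ)) - ((u (p+k+1):ℝ) - (u (p+k):ℝ))) := by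
        exact_mod_cast hintle
      rw [show p+1+k = p+k+1 from by omega]
      rw [div_sub_div _ _ (by linarith : ((u (p+k+1):ℝ) - (u (p+k):ℝ)) - 1 ≠ 0)
          (by linarith : ((u (p+k+2):ℝ) - (u (p+k+1):ℝ)) - 1 ≠ 0),
        div_le_div_iff₀ (by linarith) (by nlinarith)]
      nlinarith [hintleR]
    apply Summable.tsum_le_of_sum_range_le hsum
    intro M
    set w : ℕ → ℝ := fun j => 1/(((u (p+j+1):ℝ) - (u (p+j):ℝ)) - 1) with hw_def
    have hwnn : ∀ j, 0 ≤ w j := by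
      intro j
      have : (2:ℝ) ≤ (u (p+j+1):ℝ) - (u (p+j):ℝ) := by exact_mod_cast hg2 j
      simp only [hw_def]
      exact le_of_lt (div_pos one_pos (by linarith))
    have htele : ∑ k ∈ Finset.range M, (w k - w (k+1)) = w 0 - w M :=
      Finset.sum_range_sub' w M
    have h1 : ∑ k ∈ Finset.range M, (1:ℝ)/(u (p+1+k):ℝ)
        ≤ ∑ k ∈ Finset.range M, (w k - w (k+1)) := by
      apply Finset.sum_le_sum
      intro i _
      have h2 := hterm_le i
      simp only [hw_def]
      rw [show p+(i+1)+1 = p+i+2 from by omega]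
      exact h2
    have hw0 : w 0 = 1/(((u (p+1) - u p : ℤ):ℝ) - 1) := by
      simp only [hw_def, Nat.add_zero]
      push_cast
      ring_nf
    calc ∑ k ∈ Finset.range M, (1:ℝ)/(u (p+1+k):ℝ) ≤ w 0 - w M := by rw [← htele]; exact h1
      _ ≤ w 0 := by linarith [hwnn M]
      _ = _ := hw0
  -- final assembly
  set Sm : ℝ := ∑' k : ℕ, (1:ℝ) / (u (p+1+k) : ℝ) with hSm_def
  have hD1 : 1 ≤ u (p+1) - u p := hgpos p
  have hDR : (1:ℝ) ≤ ((u (p+1) - u p : ℤ):ℝ) := by exact_mod_cast hD1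
  have hlow' : 1/(((u (p+1) - u p : ℤ):ℝ)) < Sm := by
    have : ((u (p+1) - u p : ℤ):ℝ) = (u (p+1):ℝ) - (u p:ℝ) := by push_cast; ring
    rw [this]; exact hlow
  have hSmpos : 0 < Sm := lt_trans (by positivity) hlow'
  rw [Int.floor_eq_iff]
  constructor
  · rcases eq_or_lt_of_le hD1 with h|h
    · have : ((u (p+1) - u p - 1 : ℤ):ℝ) = 0 := by
        rw [← h]; norm_num
      rw [this]
      positivity
    · have hD2 : 2 ≤ u (p+1) - u p := by omega
      have hup := hupper hD2
      have hDm1 : (0:ℝ) < ((u (p+1) - u p : ℤ):ℝ) - 1 := by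
        have : (2:ℝ) ≤ ((u (p+1) - u p : ℤ):ℝ) := by exact_mod_cast hD2
        linarith
      have h2 := inv_anti₀ hSmpos hup
      rw [one_div, inv_inv] at h2
      push_cast
      push_cast at h2
      linarith
  · have h1 : Sm⁻¹ < ((u (p+1) - u p : ℤ):ℝ) := by
      apply inv_lt_of_inv_lt₀ (by linarith)
      rw [← one_div]
      exact hlow'
    push_cast
    push_cast at h1
    linarith

/-- For fixed t ≥ 2, n, r and all sufficiently large s, the floor of the reciprocal
tail sum equals f_{rn} - f_{r(n-1)} - 1. -/
theorem fib_tail_floor_eventually (t : ℤ) (ht : 2 ≤ t) (n r : ℕ) (hn : 0 < n)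
    (hr : 0 < r) :
    ∃ S : ℤ, ∀ s : ℤ, S ≤ s →
      ⌊(∑' k : ℕ, (1 : ℝ) / (genFib s (-t) (r * (n + k)) : ℝ))⁻¹⌋ =
        genFib s (-t) (r * n) - genFib s (-t) (r * (n - 1)) - 1 := by
  obtain ⟨m, rfl⟩ : ∃ m, r = m + 1 := ⟨r - 1, by omega⟩
  obtain ⟨p, rfl⟩ : ∃ p, n = p + 1 := ⟨n - 1, by omega⟩
  refine ⟨t + 4, fun s hs => ?_⟩
  have hbase : ∀ k, 0 ≤ genFib s (-t) k ∧ t * genFib s (-t) k ≤ genFib s (-t) (k+1) := by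
    intro k
    induction k with
    | zero => simp [genFib]
    | succ k ih =>
        obtain ⟨h0, h1⟩ := ih
        have ht0 : (0:ℤ) ≤ t := by linarith
        have h2 : 0 ≤ genFib s (-t) (k+1) := le_trans (mul_nonneg ht0 h0) h1
        refine ⟨h2, ?_⟩
        show t * genFib s (-t) (k+1) ≤ genFib s (-t) (k+2)
        rw [genFib_two]
        nlinarith [mul_nonneg ht0 h0,
          mul_nonneg (show (0:ℤ) ≤ s - t - 4 by linarith) h2]
  have hnn : ∀ k, 0 ≤ genFib s (-t) k := fun k => (hbase k).1
  have hstep : ∀ k, t * genFib s (-t) k ≤ genFib s (-t) (k+1) := fun k => (hbase k).2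
  have hpow : ∀ k, t^k ≤ genFib s (-t) (k+1) := by
    intro k
    induction k with
    | zero => simp [genFib]
    | succ k ih =>
        have h3 := hstep (k+1)
        have h2 : t * t^k ≤ t * genFib s (-t) (k+1) :=
          mul_le_mul_of_nonneg_left ih (by linarith)
        calc t^(k+1) = t * t^k := by rw [pow_succ]; ring
          _ ≤ t * genFib s (-t) (k+1) := h2
          _ ≤ genFib s (-t) (k+2) := h3
  have htm : (1:ℤ) ≤ t^m := one_le_pow_int (by linarith) m
  have hF1 : 1 ≤ genFib s (-t) (m+1) := le_trans htm (hpow m)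
  have hT2 : 2 ≤ t^(m+1) := by
    rw [pow_succ]
    nlinarith [mul_le_mul_of_nonneg_right htm (show (0:ℤ) ≤ t by linarith)]
  have hL_eq : genFib s (-t) (m+2) + (-t) * genFib s (-t) m
      = s * genFib s (-t) (m+1) - 2*t*genFib s (-t) m := by
    rw [genFib_two]; ring
  have hLT : t^(m+1) + 2 ≤ genFib s (-t) (m+2) + (-t) * genFib s (-t) m := by
    rw [hL_eq, pow_succ]
    nlinarith [hstep m, hpow m, hnn m, htm,
      mul_nonneg (show (0:ℤ) ≤ s - t - 4 by linarith)
        (show (0:ℤ) ≤ genFib s (-t) (m+1) by linarith),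
      mul_nonneg (show (0:ℤ) ≤ t + 2 by linarith)
        (show (0:ℤ) ≤ genFib s (-t) (m+1) - t^m by linarith [hpow m])]
  have hLF : genFib s (-t) (m+1) + 1 ≤ genFib s (-t) (m+2) + (-t) * genFib s (-t) m := by
    rw [hL_eq]
    nlinarith [hstep m, hF1,
      mul_nonneg (show (0:ℤ) ≤ s - 4 by linarith)
        (show (0:ℤ) ≤ genFib s (-t) (m+1) by linarith)]
  have hrec : ∀ k, genFib s (-t) ((m+1)*(k+2))
      = (genFib s (-t) (m+2) + (-t) * genFib s (-t) m) * genFib s (-t) ((m+1)*(k+1))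
        - t^(m+1) * genFib s (-t) ((m+1)*k) := by
    intro k
    have h := genFib_shift s (-t) m ((m+1)*k)
    rw [show (m+1)*k + 2*(m+1) = (m+1)*(k+2) from by ring,
      show (m+1)*k + (m+1) = (m+1)*(k+1) from by ring, neg_neg] at h
    exact h
  exact seq_floor (fun k => genFib s (-t) ((m+1)*k))
    (genFib s (-t) (m+2) + (-t) * genFib s (-t) m) (t^(m+1)) (genFib s (-t) (m+1))
    hT2 hF1 hLT hLF rfl (by norm_num) hrec p
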